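/- Let F be an orthogonal projection on a finite-dimensional complex Hilbert space and φ a positive linear map on self-adjoint operators with φ(1) = F and φ(G) = G for all 0 ≤ G ≤ F. Then φ(X) = F X F for all self-adjoint X, i.e., the coherent Lüders rule in quantum mechanics is unique. -/

import Mathlib

open scoped ComplexOrder

open Matrix

lemma psd_quad_zero {n : ℕ} {A : Matrix (Fin n) (Fin n) ℂ} (hA : A.PosSemidef)
    (h : ∀ x : Fin n → ℂ, star x ⬝ᵥ A *ᵥ x = 0) : A = 0 := by
  have h0 : ∀ x, A *ᵥ x = 0 := fun x => (hA.dotProduct_mulVec_zero_iff x).mp (h x)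
  ext i j
  have := congrFun (h0 (Pi.single j 1)) i
  simpa [mulVec_single] using this

lemma smul_real_eq_smul_complex {n : ℕ} (A : Matrix (Fin n) (Fin n) ℂ) (c : ℝ) :
    c • A = (c : ℂ) • A := by
  ext i j; simp [Complex.real_smul]

lemma herm_smul_real {n : ℕ} {A : Matrix (Fin n) (Fin n) ℂ} (hA : A.IsHermitian) (c : ℝ) :
    (c • A).IsHermitian := by
  show (c • A)ᴴ = c • A
  rw [smul_real_eq_smul_complex, conjTranspose_smul, Complex.star_def, Complex.conj_ofReal,
    hA.eq]

lemma psd_smul_real {n : ℕ} {A : Matrix (Fin n) (Fin n) ℂ} (hA : A.PosSemidef) {c : ℝ}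
    (hc : 0 ≤ c) : (c • A).PosSemidef := by
  refine PosSemidef.of_dotProduct_mulVec_nonneg (herm_smul_real hA.1 c) fun x => ?_
  rw [smul_real_eq_smul_complex, smul_mulVec, dotProduct_smul, smul_eq_mul]
  exact mul_nonneg (by exact_mod_cast hc) (hA.dotProduct_mulVec_nonneg x)

lemma quad_smul_real {n : ℕ} (A : Matrix (Fin n) (Fin n) ℂ) (c : ℝ) (x : Fin n → ℂ) :
    star x ⬝ᵥ (c • A) *ᵥ x = (c : ℂ) * (star x ⬝ᵥ A *ᵥ x) := by
  rw [smul_real_eq_smul_complex, smul_mulVec, dotProduct_smul, smul_eq_mul]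

lemma herm_sub_psd {n : ℕ} {A : Matrix (Fin n) (Fin n) ℂ} (hA : A.IsHermitian) {c : ℝ}
    (hc : ∀ i, hA.eigenvalues i ≤ c) :
    (c • (1 : Matrix (Fin n) (Fin n) ℂ) - A).PosSemidef := by
  classical
  set U : Matrix (Fin n) (Fin n) ℂ := (hA.eigenvectorUnitary : Matrix (Fin n) (Fin n) ℂ)
    with hUdef
  have hU : U * star U = 1 := mem_unitaryGroup_iff.mp hA.eigenvectorUnitary.2
  have hdiag : (diagonal (fun i => ((c - hA.eigenvalues i : ℝ) : ℂ))).PosSemidef :=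
    posSemidef_diagonal_iff.mpr fun i => by
      have h0 : (0:ℝ) ≤ c - hA.eigenvalues i := sub_nonneg.mpr (hc i)
      exact_mod_cast h0
  have hD : diagonal (fun i => ((c - hA.eigenvalues i : ℝ) : ℂ))
      = (c:ℂ) • (1 : Matrix (Fin n) (Fin n) ℂ)
        - diagonal (RCLike.ofReal ∘ hA.eigenvalues) := by
    ext i j
    by_cases h : i = j <;> simp [diagonal_apply, h, one_apply, sub_eq_add_neg]
  have h1 : U * ((c:ℂ) • (1 : Matrix (Fin n) (Fin n) ℂ)) * (star U)
      = c • (1 : Matrix (Fin n) (Fin n) ℂ) := by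
    rw [mul_smul_comm, smul_mul_assoc, mul_one, hU]
    ext i j; simp [Complex.real_smul]
  have key : c • (1 : Matrix (Fin n) (Fin n) ℂ) - A
      = U * diagonal (fun i => ((c - hA.eigenvalues i : ℝ) : ℂ)) * Uᴴ := by
    rw [← star_eq_conjTranspose, hD, mul_sub, sub_mul, h1, hUdef]
    conv_lhs => rw [hA.spectral_theorem]
    rfl
  rw [key]
  exact hdiag.mul_mul_conjTranspose_same U

/-- Every positive semidefinite matrix can be scaled to an effect. -/
lemma psd_scale_to_effect {n : ℕ} {P : Matrix (Fin n) (Fin n) ℂ} (hP : P.PosSemidef) :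
    ∃ t : ℝ, 0 < t ∧ ((1 : Matrix (Fin n) (Fin n) ℂ) - t • P).PosSemidef := by
  classical
  set c : ℝ := ∑ i, |hP.1.eigenvalues i| with hcdef
  have hc0 : 0 ≤ c := Finset.sum_nonneg fun i _ => abs_nonneg _
  have hbound : ∀ i, hP.1.eigenvalues i ≤ c + 1 := by
    intro i
    have h1 : |hP.1.eigenvalues i| ≤ c :=
      Finset.single_le_sum (f := fun i => |hP.1.eigenvalues i|)
        (fun i _ => abs_nonneg _) (Finset.mem_univ i)
    have := le_abs_self (hP.1.eigenvalues i)
    linarith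
  have hsub := herm_sub_psd hP.1 hbound
  refine ⟨(c+1)⁻¹, by positivity, ?_⟩
  have key : (1 : Matrix (Fin n) (Fin n) ℂ) - (c+1)⁻¹ • P
      = (c+1)⁻¹ • ((c+1) • (1 : Matrix (Fin n) (Fin n) ℂ) - P) := by
    rw [smul_sub, smul_smul, inv_mul_cancel₀ (by positivity), one_smul]
  rw [key]
  exact psd_smul_real hsub (by positivity)

theorem clr_unique_quantum {n : ℕ} (F : Matrix (Fin n) (Fin n) ℂ)
    (hFh : F.IsHermitian) (hFproj : F * F = F)
    (φ : Matrix (Fin n) (Fin n) ℂ →ₗ[ℝ] Matrix (Fin n) (Fin n) ℂ)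
    (hpos : ∀ X : Matrix (Fin n) (Fin n) ℂ, X.PosSemidef → (φ X).PosSemidef)
    (hone : φ 1 = F)
    (hcoh : ∀ G : Matrix (Fin n) (Fin n) ℂ, G.PosSemidef → (F - G).PosSemidef → φ G = G) :
    ∀ X : Matrix (Fin n) (Fin n) ℂ, X.IsHermitian → φ X = F * X * F := by
  classical
  set Fc : Matrix (Fin n) (Fin n) ℂ := 1 - F with hFcdef
  have hFch : Fc.IsHermitian := Matrix.isHermitian_one.sub hFh
  have hFpsd : F.PosSemidef := by
    have hF : F = Fᴴ * F := by rw [hFh.eq, hFproj]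
    rw [hF]; exact posSemidef_conjTranspose_mul_self F
  have hFcproj : Fc * Fc = Fc := by
    rw [hFcdef]
    simp only [mul_sub, sub_mul, mul_one, one_mul, hFproj]
    abel
  have hFcpsd : Fc.PosSemidef := by
    have hF : Fc = Fcᴴ * Fc := by rw [hFch.eq, hFcproj]
    rw [hF]; exact posSemidef_conjTranspose_mul_self Fc
  -- Step A : the claim for effects
  have stepA : ∀ G : Matrix (Fin n) (Fin n) ℂ, G.PosSemidef →
      ((1 : Matrix (Fin n) (Fin n) ℂ) - G).PosSemidef → φ G = F * G * F := by
    intro G hG h1G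
    -- F G F is an effect below F
    have hFGF_psd : (F * G * F).PosSemidef := by
      have := hG.mul_mul_conjTranspose_same F
      rwa [hFh.eq] at this
    have hFGF_le : (F - F * G * F).PosSemidef := by
      have := h1G.mul_mul_conjTranspose_same F
      rw [hFh.eq] at this
      have heq : F * (1 - G) * F = F - F * G * F := by
        simp only [mul_sub, sub_mul, mul_one, one_mul, hFproj]
      rwa [heq] at this
    have hφFGF : φ (F * G * F) = F * G * F := hcoh _ hFGF_psd hFGF_le
    -- the corner A = Fc G Fc maps to 0
    set A : Matrix (Fin n) (Fin n) ℂ := Fc * G * Fc with hAdef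
    have hA_psd : A.PosSemidef := by
      have := hG.mul_mul_conjTranspose_same Fc
      rwa [hFch.eq] at this
    have hA_le : (Fc - A).PosSemidef := by
      have := h1G.mul_mul_conjTranspose_same Fc
      rw [hFch.eq] at this
      have heq : Fc * (1 - G) * Fc = Fc - A := by
        rw [hAdef]
        simp only [mul_sub, sub_mul, mul_one, one_mul, hFcproj]
      rwa [heq] at this
    set B : Matrix (Fin n) (Fin n) ℂ := φ A with hBdef
    have hB : B.PosSemidef := hpos _ hA_psd
    have hk : ∀ k : ℕ, (F - ((k:ℝ)+1) • B).PosSemidef := by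
      intro k
      induction k with
      | zero =>
        have hsum : ((1 : Matrix (Fin n) (Fin n) ℂ) - A).PosSemidef := by
          have := hFpsd.add hA_le
          have heq : F + (Fc - A) = 1 - A := by rw [hFcdef]; abel
          rwa [heq] at this
        have := hpos _ hsum
        rw [map_sub, hone, ← hBdef] at this
        rw [Nat.cast_zero, zero_add, one_smul]
        exact this
      | succ k ih =>
        have hkB_psd : (((k:ℝ)+1) • B).PosSemidef := psd_smul_real hB (by positivity)
        have hE_psd : (A + ((k:ℝ)+1) • B).PosSemidef := hA_psd.add hkB_psd
        have hE_le : ((1 : Matrix (Fin n) (Fin n) ℂ) - (A + ((k:ℝ)+1) • B)).PosSemidef := by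
          have := hA_le.add ih
          have heq : (Fc - A) + (F - ((k:ℝ)+1) • B) = 1 - (A + ((k:ℝ)+1) • B) := by
            rw [hFcdef]; abel
          rwa [heq] at this
        have hφkB : φ (((k:ℝ)+1) • B) = ((k:ℝ)+1) • B := hcoh _ hkB_psd ih
        have hφE : φ (A + ((k:ℝ)+1) • B) = ((k:ℝ)+2) • B := by
          rw [map_add, hφkB, ← hBdef]
          have : ((k:ℝ)+2) • B = B + ((k:ℝ)+1) • B := by
            rw [show ((k:ℝ)+2) = 1 + ((k:ℝ)+1) by ring, add_smul, one_smul]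
          rw [this]
        have := hpos _ hE_le
        rw [map_sub, hone, hφE] at this
        have hcast : ((k+1:ℕ):ℝ) + 1 = (k:ℝ) + 2 := by push_cast; ring
        rw [hcast]
        exact this
    have hB0 : B = 0 := by
      apply psd_quad_zero hB
      intro x
      have hb := hB.dotProduct_mulVec_nonneg x
      set b : ℂ := star x ⬝ᵥ B *ᵥ x with hbdef
      set f : ℂ := star x ⬝ᵥ F *ᵥ x with hfdef
      have hble : ∀ k : ℕ, ((k:ℝ)+1) * b.re ≤ f.re := by
        intro k
        have h2 := (hk k).dotProduct_mulVec_nonneg x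
        rw [sub_mulVec, dotProduct_sub, quad_smul_real] at h2
        have h3 := (Complex.le_def.mp h2).1
        simp only [Complex.zero_re, Complex.sub_re, Complex.re_ofReal_mul] at h3
        linarith
      have hbre : 0 ≤ b.re ∧ b.im = 0 := by
        have := Complex.le_def.mp hb
        exact ⟨by simpa using this.1, by simpa using this.2.symm⟩
      have hbre0 : b.re = 0 := by
        by_contra h
        have hpos' : 0 < b.re := lt_of_le_of_ne hbre.1 (Ne.symm h)
        obtain ⟨k, hk'⟩ := exists_nat_gt (f.re / b.re)
        have := hble k
        have h1 : f.re < ((k:ℝ)) * b.re := by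
          rw [div_lt_iff₀ hpos'] at hk'
          linarith
        nlinarith
      simp [Complex.ext_iff, hbre0, hbre.2]
    have hφA : φ A = 0 := hB0
    -- cross term
    set C : Matrix (Fin n) (Fin n) ℂ := φ G - F * G * F with hCdef
    have hCh : C.IsHermitian := (hpos G hG).1.sub hFGF_psd.1
    have hGdecomp : G = F * G * F + (F * G * Fc + Fc * G * F) + A := by
      rw [hAdef, hFcdef]
      noncomm_ring
    have hφcross : φ (F * G * Fc + Fc * G * F) = C := by
      have := congrArg φ hGdecomp
      rw [map_add, map_add, hφFGF, hφA, add_zero] at this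
      rw [hCdef]
      linear_combination (norm := abel) this.symm
    have hlam : ∀ t : ℝ, (F * G * F + t • C).PosSemidef := by
      intro t
      set M : Matrix (Fin n) (Fin n) ℂ := F + t • Fc with hMdef
      have hMh : M.IsHermitian := hFh.add (herm_smul_real hFch t)
      have hMGM : (M * G * M).PosSemidef := by
        have := hG.mul_mul_conjTranspose_same M
        rwa [hMh.eq] at this
      have hexp : M * G * M
          = F * G * F + t • (F * G * Fc + Fc * G * F) + (t*t) • A := by
        rw [hMdef, hAdef]
        simp only [add_mul, mul_add, smul_mul_assoc, mul_smul_comm, smul_smul, smul_add]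
        module
      have := hpos _ hMGM
      rw [hexp, map_add, map_add, LinearMap.map_smul, LinearMap.map_smul, hφFGF, hφcross,
        hφA, smul_zero, add_zero] at this
      exact this
    have hC0 : C = 0 := by
      have hquad : ∀ x : Fin n → ℂ, star x ⬝ᵥ C *ᵥ x = 0 := by
        intro x
        set a : ℂ := star x ⬝ᵥ (F * G * F) *ᵥ x with hadef
        set c : ℂ := star x ⬝ᵥ C *ᵥ x with hcdef
        have hform : ∀ t : ℝ, 0 ≤ a + (t:ℂ) * c := by
          intro t
          have := (hlam t).dotProduct_mulVec_nonneg x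
          rwa [add_mulVec, dotProduct_add, ← hadef, quad_smul_real, ← hcdef] at this
        have him' : ∀ t : ℝ, a.im + t * c.im = 0 := by
          intro t
          have h := (Complex.le_def.mp (hform t)).2
          simpa [Complex.im_ofReal_mul] using h.symm
        have him : c.im = 0 := by linarith [him' 0, him' 1]
        have hre' : ∀ t : ℝ, 0 ≤ a.re + t * c.re := by
          intro t
          have h := (Complex.le_def.mp (hform t)).1
          simpa [Complex.re_ofReal_mul] using h
        have hre : c.re = 0 := by
          by_contra h
          have h1 := hre' (-(a.re + 1) / c.re)
          rw [div_mul_cancel₀ _ h] at h1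
          linarith
        simp [Complex.ext_iff, hre, him]
      have hCpsd : C.PosSemidef := PosSemidef.of_dotProduct_mulVec_nonneg hCh fun x => by rw [hquad x]
      exact psd_quad_zero hCpsd hquad
    have := sub_eq_zero.mp (hCdef ▸ hC0)
    exact this
  -- Step B : the claim for positive semidefinite matrices
  have stepB : ∀ P : Matrix (Fin n) (Fin n) ℂ, P.PosSemidef → φ P = F * P * F := by
    intro P hP
    obtain ⟨t, ht, hE⟩ := psd_scale_to_effect hP
    have hEpsd : (t • P).PosSemidef := psd_smul_real hP ht.le
    have hφE : φ (t • P) = F * (t • P) * F := stepA _ hEpsd hE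
    rw [LinearMap.map_smul, mul_smul_comm, smul_mul_assoc] at hφE
    exact smul_right_injective _ ht.ne' hφE
  -- Step C : general hermitian matrices
  intro X hX
  set c : ℝ := ∑ i, |hX.eigenvalues i| with hcdef
  have hc0 : 0 ≤ c := Finset.sum_nonneg fun i _ => abs_nonneg _
  have hbound : ∀ i, hX.eigenvalues i ≤ c := by
    intro i
    have h1 : |hX.eigenvalues i| ≤ c :=
      Finset.single_le_sum (f := fun i => |hX.eigenvalues i|)
        (fun i _ => abs_nonneg _) (Finset.mem_univ i)
    linarith [le_abs_self (hX.eigenvalues i)]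
  have hQ : (c • (1 : Matrix (Fin n) (Fin n) ℂ) - X).PosSemidef := herm_sub_psd hX hbound
  have hP : (c • (1 : Matrix (Fin n) (Fin n) ℂ)).PosSemidef :=
    psd_smul_real Matrix.PosSemidef.one hc0
  have hXeq : X = c • (1 : Matrix (Fin n) (Fin n) ℂ)
      - (c • (1 : Matrix (Fin n) (Fin n) ℂ) - X) := by abel
  rw [hXeq, map_sub, stepB _ hP, stepB _ hQ]
  simp only [mul_sub, sub_mul]
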